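/- For n = 2 the quantum upper bound is attained: the maximum over unit vectors v₁, v₂ ∈ ℝ³ and encodings r : {0,1}² → ℝ³ with ‖r x‖ ≤ 1 of the average success probability (1/(2²·2)) · Σ_{x ∈ {0,1}²} Σ_{i < 2} (1 + (−1)^{x i} · ⟨v i, r x⟩)/2 equals 1/2 + 1/(2√2), and it is attained by the orthonormal vectors v₁ = (1,0,0), v₂ = (0,1,0) with r x = ((−1)^{x₁}, (−1)^{x₂}, 0)/√2. -/

import Mathlib

open scoped RealInnerProductSpace

/-- The average success probability, in the Bloch-vector formulation, of the pure
`n ↦ 1` quantum random access code with measurement vectors `v` and encoding `r`. -/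
noncomputable def avgProb (n : ℕ) (v : Fin n → EuclideanSpace ℝ (Fin 3))
    (r : (Fin n → Bool) → EuclideanSpace ℝ (Fin 3)) : ℝ :=
  (1 / ((2 : ℝ) ^ n * n)) *
    ∑ x : Fin n → Bool, ∑ i : Fin n,
      (1 + (if x i then (-1 : ℝ) else 1) * ⟪v i, r x⟫) / 2

private lemma sum_fin2bool (f : (Fin 2 → Bool) → ℝ) :
    ∑ x : Fin 2 → Bool, f x =
      f ![false, false] + f ![false, true] + f ![true, false] + f ![true, true] := by
  rw [← (finTwoArrowEquiv Bool).symm.sum_comp f]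
  simp [Fintype.sum_prod_type, finTwoArrowEquiv]
  ring

private lemma aux_norm (a b : EuclideanSpace ℝ (Fin 3)) (ha : ‖a‖ = 1) (hb : ‖b‖ = 1) :
    ‖a + b‖ + ‖a - b‖ ≤ 2 * Real.sqrt 2 := by
  have hpar : ‖a + b‖ ^ 2 + ‖a - b‖ ^ 2 = 4 := by
    have := norm_add_sq_real a b
    have := norm_sub_sq_real a b
    nlinarith [this]
  have h1 : (0:ℝ) ≤ ‖a + b‖ := norm_nonneg _
  have h2 : (0:ℝ) ≤ ‖a - b‖ := norm_nonneg _
  have hs : Real.sqrt 2 * Real.sqrt 2 = 2 := Real.mul_self_sqrt (by norm_num)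
  nlinarith [sq_nonneg (‖a + b‖ - ‖a - b‖), Real.sqrt_nonneg 2,
    sq_nonneg (‖a + b‖ + ‖a - b‖ - 2 * Real.sqrt 2)]

private lemma avg_le (v : Fin 2 → EuclideanSpace ℝ (Fin 3))
    (r : (Fin 2 → Bool) → EuclideanSpace ℝ (Fin 3))
    (hv : ∀ i, ‖v i‖ = 1) (hr : ∀ x, ‖r x‖ ≤ 1) :
    avgProb 2 v r ≤ 1 / 2 + 1 / (2 * Real.sqrt 2) := by
  have hs : Real.sqrt 2 * Real.sqrt 2 = 2 := Real.mul_self_sqrt (by norm_num)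
  have hs0 : (0:ℝ) < Real.sqrt 2 := by positivity
  -- rewrite the inner sum
  have key : ∀ x : Fin 2 → Bool,
      (∑ i : Fin 2, (1 + (if x i then (-1 : ℝ) else 1) * ⟪v i, r x⟫) / 2)
        = 1 + ⟪(if x 0 then (-1:ℝ) else 1) • v 0 + (if x 1 then (-1:ℝ) else 1) • v 1,
            r x⟫ / 2 := by
    intro x
    rw [Fin.sum_univ_two, inner_add_left, real_inner_smul_left, real_inner_smul_left]
    ring
  -- bound each inner product term
  have hb : ∀ x : Fin 2 → Bool,
      ⟪(if x 0 then (-1:ℝ) else 1) • v 0 + (if x 1 then (-1:ℝ) else 1) • v 1, r x⟫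
        ≤ ‖(if x 0 then (-1:ℝ) else 1) • v 0 + (if x 1 then (-1:ℝ) else 1) • v 1‖ := by
    intro x
    calc _ ≤ ‖(if x 0 then (-1:ℝ) else 1) • v 0 + (if x 1 then (-1:ℝ) else 1) • v 1‖
            * ‖r x‖ := real_inner_le_norm _ _
    _ ≤ _ := by
        have := hr x
        nlinarith [norm_nonneg ((if x 0 then (-1:ℝ) else 1) • v 0 +
          (if x 1 then (-1:ℝ) else 1) • v 1)]
  have hsum : ∑ x : Fin 2 → Bool,
      ⟪(if x 0 then (-1:ℝ) else 1) • v 0 + (if x 1 then (-1:ℝ) else 1) • v 1, r x⟫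
        ≤ 4 * Real.sqrt 2 := by
    calc ∑ x : Fin 2 → Bool,
        ⟪(if x 0 then (-1:ℝ) else 1) • v 0 + (if x 1 then (-1:ℝ) else 1) • v 1, r x⟫
        ≤ ∑ x : Fin 2 → Bool,
          ‖(if x 0 then (-1:ℝ) else 1) • v 0 + (if x 1 then (-1:ℝ) else 1) • v 1‖ :=
        Finset.sum_le_sum fun x _ => hb x
    _ = 2 * (‖v 0 + v 1‖ + ‖v 0 - v 1‖) := by
        rw [sum_fin2bool]
        norm_num
        rw [show -v 0 + -v 1 = -(v 0 + v 1) by abel, norm_neg,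
          show -v 0 + v 1 = -(v 0 - v 1) by abel, norm_neg,
          show v 0 + -v 1 = v 0 - v 1 by abel]
        ring
    _ ≤ 2 * (2 * Real.sqrt 2) := by
        have := aux_norm (v 0) (v 1) (hv 0) (hv 1)
        linarith
    _ = 4 * Real.sqrt 2 := by ring
  have hre : avgProb 2 v r = 1 / 2 + (∑ x : Fin 2 → Bool,
      ⟪(if x 0 then (-1:ℝ) else 1) • v 0 + (if x 1 then (-1:ℝ) else 1) • v 1, r x⟫) / 16 := by
    unfold avgProb
    rw [Finset.sum_congr rfl fun x _ => key x]
    rw [Finset.sum_add_distrib, Finset.sum_const]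
    simp only [Finset.card_univ]
    rw [show Fintype.card (Fin 2 → Bool) = 4 from by simp, ← Finset.sum_div]
    push_cast
    ring
  rw [hre]
  have : 1 / (2 * Real.sqrt 2) = (4 * Real.sqrt 2) / 16 := by
    rw [div_eq_div_iff (by positivity) (by norm_num)]
    nlinarith
  rw [this]
  have h16 : (0:ℝ) < 16 := by norm_num
  gcongr

/-- For `n = 2` the quantum upper bound `1/2 + 1/(2√2)` is the maximum of the average
success probability, and it is attained by `v₁ = (1,0,0)`, `v₂ = (0,1,0)` and
`r x = ((−1)^{x₁}, (−1)^{x₂}, 0)/√2`. -/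
theorem stmt13 :
    IsGreatest
      {p : ℝ | ∃ (v : Fin 2 → EuclideanSpace ℝ (Fin 3))
        (r : (Fin 2 → Bool) → EuclideanSpace ℝ (Fin 3)),
        (∀ i, ‖v i‖ = 1) ∧ (∀ x, ‖r x‖ ≤ 1) ∧ p = avgProb 2 v r}
      (1 / 2 + 1 / (2 * Real.sqrt 2)) ∧
    avgProb 2
      ![EuclideanSpace.single 0 1, EuclideanSpace.single 1 1]
      (fun x => (WithLp.equiv 2 (Fin 3 → ℝ)).symm
        ![(if x 0 then (-1 : ℝ) else 1) / Real.sqrt 2,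
          (if x 1 then (-1 : ℝ) else 1) / Real.sqrt 2, 0])
      = 1 / 2 + 1 / (2 * Real.sqrt 2) := by
  have hs : Real.sqrt 2 * Real.sqrt 2 = 2 := Real.mul_self_sqrt (by norm_num)
  have hs0 : (0:ℝ) < Real.sqrt 2 := by positivity
  have hsq : ∀ b : Bool, (if b then (-1:ℝ) else 1) * (if b then (-1:ℝ) else 1) = 1 := by
    intro b; cases b <;> norm_num
  -- value at the witness
  have hval : avgProb 2
      ![EuclideanSpace.single 0 1, EuclideanSpace.single 1 1]
      (fun x => (WithLp.equiv 2 (Fin 3 → ℝ)).symm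
        ![(if x 0 then (-1 : ℝ) else 1) / Real.sqrt 2,
          (if x 1 then (-1 : ℝ) else 1) / Real.sqrt 2, 0])
      = 1 / 2 + 1 / (2 * Real.sqrt 2) := by
    unfold avgProb
    have hterm : ∀ x : Fin 2 → Bool,
        (∑ i : Fin 2, (1 + (if x i then (-1 : ℝ) else 1) *
          ⟪(![EuclideanSpace.single 0 1, EuclideanSpace.single 1 1] : Fin 2 → _) i,
            (WithLp.equiv 2 (Fin 3 → ℝ)).symm
              ![(if x 0 then (-1 : ℝ) else 1) / Real.sqrt 2,
                (if x 1 then (-1 : ℝ) else 1) / Real.sqrt 2, 0]⟫) / 2)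
          = 1 + 1 / Real.sqrt 2 := by
      intro x
      rw [Fin.sum_univ_two]
      simp only [Matrix.cons_val_zero, Matrix.cons_val_one, Matrix.head_cons]
      rw [EuclideanSpace.inner_single_left, EuclideanSpace.inner_single_left]
      simp only [RCLike.conj_to_real, WithLp.equiv_symm_apply, PiLp.toLp_apply, Matrix.cons_val_zero,
        Matrix.cons_val_one, Matrix.head_cons, one_mul]
      rw [← mul_div_assoc, hsq (x 0), ← mul_div_assoc, hsq (x 1)]
      ring
    rw [Finset.sum_congr rfl fun x _ => hterm x, Finset.sum_const]
    simp only [Finset.card_univ]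
    rw [show Fintype.card (Fin 2 → Bool) = 4 from by simp]
    have : (1:ℝ) / (2 * Real.sqrt 2) = 1 / Real.sqrt 2 / 2 := by ring
    rw [this]
    push_cast
    field_simp
    have hinv : √2 * (√2)⁻¹ = 1 := mul_inv_cancel₀ hs0.ne'
    rw [nsmul_eq_mul, div_eq_mul_inv]; push_cast; linear_combination (4 * (√2 + 1)) * hinv
  refine ⟨⟨?_, ?_⟩, hval⟩
  · refine ⟨_, _, ?_, ?_, hval.symm⟩
    · intro i
      fin_cases i <;> simp [EuclideanSpace.norm_single]
    · intro x
      rw [EuclideanSpace.norm_eq]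
      have : ∑ i : Fin 3, ‖((WithLp.equiv 2 (Fin 3 → ℝ)).symm
          ![(if x 0 then (-1 : ℝ) else 1) / Real.sqrt 2,
            (if x 1 then (-1 : ℝ) else 1) / Real.sqrt 2, 0] : EuclideanSpace ℝ (Fin 3)) i‖ ^ 2
          = 1 := by
        rw [Fin.sum_univ_three]
        simp only [WithLp.equiv_symm_apply, PiLp.toLp_apply, Matrix.cons_val_zero, Matrix.cons_val_one,
          Matrix.head_cons, Matrix.cons_val_two, Matrix.tail_cons, Real.norm_eq_abs, sq_abs]
        have h0 : ((if x 0 then (-1:ℝ) else 1) / Real.sqrt 2) ^ 2 = 1 / 2 := by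
          rw [div_pow, sq, hsq (x 0), sq, hs]
        have h1 : ((if x 1 then (-1:ℝ) else 1) / Real.sqrt 2) ^ 2 = 1 / 2 := by
          rw [div_pow, sq, hsq (x 1), sq, hs]
        rw [h0, h1]; norm_num
      rw [this, Real.sqrt_one]
  · rintro p ⟨v, r, hv, hr, rfl⟩
    exact avg_le v r hv hr
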